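/- For κ = 8, with ⟨x⟩ = sin(πx/8)/sin(π/8) for real x, the following identities hold: ⟨2/3⟩·⟨7/3⟩·⟨4⟩ / (⟨1/3⟩·⟨4/3⟩·⟨2⟩) = 2 + √6 and ⟨7/3⟩·⟨8/3⟩·⟨5⟩ / (⟨1⟩·⟨4/3⟩·⟨5/3⟩) = 3 + √6. -/

import Mathlib

/-- The q-number at altitude `κ`: `⟨x⟩ = sin(πx/κ)/sin(π/κ)`. -/
noncomputable def qnum (κ x : ℝ) : ℝ := Real.sin (Real.pi * x / κ) / Real.sin (Real.pi / κ)

open Real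

lemma sqrt_six_mul_sqrt_two : Real.sqrt 6 * Real.sqrt 2 = 2 * Real.sqrt 3 := by
  rw [← Real.sqrt_mul (by norm_num : (6:ℝ) ≥ 0) 2,
    show (6:ℝ) * 2 = 2^2 * 3 by norm_num,
    Real.sqrt_mul (by positivity) 3, Real.sqrt_sq (by norm_num : (2:ℝ) ≥ 0)]

lemma sqrt_three_mul_sqrt_two : Real.sqrt 3 * Real.sqrt 2 = Real.sqrt 6 := by
  rw [← Real.sqrt_mul (by norm_num : (3:ℝ) ≥ 0) 2]; norm_num

lemma sqrt_three_mul_sqrt_six : Real.sqrt 3 * Real.sqrt 6 = 3 * Real.sqrt 2 := by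
  rw [← Real.sqrt_mul (by norm_num : (3:ℝ) ≥ 0) 6,
    show (3:ℝ) * 6 = 3^2 * 2 by norm_num,
    Real.sqrt_mul (by positivity) 2, Real.sqrt_sq (by norm_num : (3:ℝ) ≥ 0)]

lemma cos_pi_div_twelve' : Real.cos (π/12) = (Real.sqrt 6 + Real.sqrt 2) / 4 := by
  have h : π/12 = π/3 - π/4 := by ring
  rw [h, Real.cos_sub, Real.cos_pi_div_three, Real.cos_pi_div_four,
    Real.sin_pi_div_three, Real.sin_pi_div_four]
  rw [← sqrt_three_mul_sqrt_two]; ring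

/-- Quantum dimensions of the two fundamental representations of G2 at level 4
(altitude κ = 8): the basic `{0,1}` has quantum dimension 2 + √6 and the
adjoint `{1,0}` has quantum dimension 3 + √6. -/
theorem g2_level4_fundamental_qdims :
    qnum 8 (2/3) * qnum 8 (7/3) * qnum 8 4 / (qnum 8 (1/3) * qnum 8 (4/3) * qnum 8 2)
      = 2 + Real.sqrt 6 ∧
    qnum 8 (7/3) * qnum 8 (8/3) * qnum 8 5 / (qnum 8 1 * qnum 8 (4/3) * qnum 8 (5/3))
      = 3 + Real.sqrt 6 := by
  have pi_pos := Real.pi_pos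
  have hs : Real.sin (π/8) ≠ 0 := by
    have := Real.sin_pos_of_pos_of_lt_pi (x := π/8) (by positivity) (by linarith)
    linarith
  have hpos : ∀ k : ℝ, 0 < k → k < 24 → 0 < Real.sin (k * π / 24) := by
    intro k hk hk24
    apply Real.sin_pos_of_pos_of_lt_pi (by positivity)
    rw [div_lt_iff₀ (by norm_num)]
    nlinarith
  unfold qnum
  constructor
  · -- ⟨2/3⟩⟨7/3⟩⟨4⟩ / (⟨1/3⟩⟨4/3⟩⟨2⟩)
    rw [show Real.pi * (2/3) / 8 = π/12 by ring,
        show Real.pi * (7/3) / 8 = π/2 - 5*π/24 by ring,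
        show Real.pi * 4 / 8 = π/2 by ring,
        show Real.pi * (1/3) / 8 = π/24 by ring,
        show Real.pi * (4/3) / 8 = π/6 by ring,
        show Real.pi * 2 / 8 = π/4 by ring,
        Real.sin_pi_div_two_sub, Real.sin_pi_div_two,
        Real.sin_pi_div_six, Real.sin_pi_div_four]
    have h1 : 0 < Real.sin (π/24) := by
      have := hpos 1 (by norm_num) (by norm_num); simpa using this
    have key : Real.sin (π/12) * Real.cos (5*π/24)
        = (2 + Real.sqrt 6) * (Real.sin (π/24) * (1/2) * (Real.sqrt 2/2)) := by
      rw [show π/12 = 2 * (π/24) by ring, Real.sin_two_mul]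
      have hp : Real.cos (π/24) * Real.cos (5*π/24)
          = (Real.cos (π/6) + Real.cos (π/4)) / 2 := by
        rw [show π/6 = 5*π/24 - π/24 by ring, show π/4 = 5*π/24 + π/24 by ring,
          Real.cos_sub, Real.cos_add]
        ring
      calc 2 * Real.sin (π/24) * Real.cos (π/24) * Real.cos (5*π/24)
          = Real.sin (π/24) * (2 * (Real.cos (π/24) * Real.cos (5*π/24))) := by ring
        _ = Real.sin (π/24) * (Real.cos (π/6) + Real.cos (π/4)) := by rw [hp]; ring
        _ = _ := by
            rw [Real.cos_pi_div_six, Real.cos_pi_div_four]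
            nlinarith [sqrt_six_mul_sqrt_two]
    have h8 : 0 < Real.sin (π/8) := by
      have := hpos 3 (by norm_num) (by norm_num)
      have e : (3:ℝ) * π / 24 = π/8 := by ring
      rwa [e] at this
    rw [div_eq_iff (by
      have h2 := Real.sqrt_pos.mpr (by norm_num : (0:ℝ) < 2)
      positivity)]
    linear_combination key / Real.sin (π/8) ^ 3
  · -- ⟨7/3⟩⟨8/3⟩⟨5⟩ / (⟨1⟩⟨4/3⟩⟨5/3⟩)
    rw [show Real.pi * (7/3) / 8 = π/2 - 5*π/24 by ring,
        show Real.pi * (8/3) / 8 = π/3 by ring,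
        show Real.pi * 5 / 8 = π - (π/2 - π/8) by ring,
        show Real.pi * 1 / 8 = π/8 by ring,
        show Real.pi * (4/3) / 8 = π/6 by ring,
        show Real.pi * (5/3) / 8 = 5*π/24 by ring,
        Real.sin_pi_div_two_sub, Real.sin_pi_sub, Real.sin_pi_div_two_sub,
        Real.sin_pi_div_three, Real.sin_pi_div_six]
    have h3 : 0 < Real.sin (π/8) := by
      have := hpos 3 (by norm_num) (by norm_num)
      have e : (3:ℝ) * π / 24 = π/8 := by ring
      rwa [e] at this
    have h5 : 0 < Real.sin (5*π/24) := by
      have := hpos 5 (by norm_num) (by norm_num)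
      have e : (5:ℝ) * π / 24 = 5*π/24 := by ring
      rwa [e] at this
    have hp1 : Real.cos (5*π/24) * Real.cos (π/8)
        = (Real.cos (π/12) + Real.cos (π/3)) / 2 := by
      rw [show π/12 = 5*π/24 - π/8 by ring, show π/3 = 5*π/24 + π/8 by ring,
        Real.cos_sub, Real.cos_add]
      ring
    have hp2 : Real.sin (π/8) * Real.sin (5*π/24)
        = (Real.cos (π/12) - Real.cos (π/3)) / 2 := by
      rw [show π/12 = 5*π/24 - π/8 by ring, show π/3 = 5*π/24 + π/8 by ring,
        Real.cos_sub, Real.cos_add]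
      ring
    have key : Real.cos (5*π/24) * (Real.sqrt 3/2) * Real.cos (π/8)
        = (3 + Real.sqrt 6) * (Real.sin (π/8) * (1/2) * Real.sin (5*π/24)) := by
      rw [cos_pi_div_twelve', Real.cos_pi_div_three] at hp1 hp2
      linear_combination (Real.sqrt 3 / 2) * hp1 - ((3 + Real.sqrt 6) / 2) * hp2
        + (1/16) * sqrt_three_mul_sqrt_six + (1/16) * sqrt_three_mul_sqrt_two
        - (1/16) * Real.sq_sqrt (by norm_num : (0:ℝ) ≤ 6)
        - (1/16) * sqrt_six_mul_sqrt_two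
    rw [div_eq_iff (by positivity)]
    linear_combination key / Real.sin (π/8) ^ 3
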